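/- arXiv:1110.5488 — 2 statements merged into one kernel-verified Lean document; each statement's English description precedes it below -/
import Mathlib

section
/- (Proposition 4: local Gärtner–Ellis theorem.) For each n ≥ 1 let ℙ_n be a probability measure on a measurable space (Ω, 𝒯), with expectation 𝔼_n, and let S_n : Ω → ℝ be a random variable. Assume that there are θ_Λ > 0 and a function Λ : [−θ_Λ, θ_Λ] → ℝ, strictly convex and continuously differentiable with Λ'(0) = 0, such that lim_{n→∞} (1/n) log 𝔼_n[exp(θ S_n)] = Λ(θ) for all θ ∈ [−θ_Λ, θ_Λ]. Define ε₊ = Λ'(θ_Λ) > 0, ε₋ = Λ'(−θ_Λ) < 0, and c(ε) = sup_{|θ| ≤ θ_Λ} { θε − Λ(θ) }. Then c is nonnegative, strictly convex on [ε₋, ε₊], continuous, vanishes only at 0, and for every 0 < ε < ε₀ := ε₊ one has lim_{n→∞} (1/n) log ℙ_n(S_n > nε) = −c(ε). -/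
open MeasureTheory Filter Topology

lemma aux_tangent_le {S : Set ℝ} {f : ℝ → ℝ} {f'x x y : ℝ} (hf : ConvexOn ℝ S f)
    (hx : x ∈ S) (hy : y ∈ S) (hd : HasDerivWithinAt f f'x S x) :
    f x + f'x * (y - x) ≤ f y := by
  rcases lt_trichotomy x y with h | h | h
  · have h1 := hf.le_slope_of_hasDerivWithinAt hx hy h hd
    rw [slope_def_field] at h1
    have h' : 0 < y - x := by linarith
    have := (le_div_iff₀ h').mp h1
    linarith
  · simp [h]
  · have h1 := hf.slope_le_of_hasDerivWithinAt hy hx h hd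
    rw [slope_def_field] at h1
    have h' : 0 < x - y := by linarith
    have := (div_le_iff₀ h').mp h1
    linarith

lemma aux_tangent_lt {S : Set ℝ} {f : ℝ → ℝ} {f'x x y : ℝ} (hf : StrictConvexOn ℝ S f)
    (hx : x ∈ S) (hy : y ∈ S) (hne : y ≠ x) (hd : HasDerivWithinAt f f'x S x) :
    f x + f'x * (y - x) < f y := by
  rcases lt_trichotomy x y with h | h | h
  · have h1 := hf.lt_slope_of_hasDerivWithinAt hx hy h hd
    rw [slope_def_field] at h1
    have h' : 0 < y - x := by linarith
    have := (lt_div_iff₀ h').mp h1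
    linarith
  · exact absurd h.symm hne
  · have h1 := hf.slope_lt_of_hasDerivWithinAt hy hx h hd
    rw [slope_def_field] at h1
    have h' : 0 < x - y := by linarith
    have := (div_lt_iff₀ h').mp h1
    linarith

lemma aux_mul_neg {n d a c b : ℝ} (hn : 0 < n) (h : d + n⁻¹ * a + n⁻¹ * c - n⁻¹ * b < 0) :
    n * d + a + c - b < 0 := by
  have e : n * (d + n⁻¹ * a + n⁻¹ * c - n⁻¹ * b) = n * d + a + c - b := by
    field_simp
  have := mul_neg_of_pos_of_neg hn h
  linarith [this, e.ge, e.le]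

set_option maxHeartbeats 2000000 in
/-- **Proposition 4 : local Gärtner–Ellis theorem.** If
`(1/n) log 𝔼_n[e^{θ Sₙ}] → Λ(θ)` on `[−θ_Λ, θ_Λ]` with `Λ` strictly convex, continuously
differentiable and `Λ'(0) = 0`, then with `ε₊ = Λ'(θ_Λ) > 0`, `ε₋ = Λ'(−θ_Λ) < 0` and
`c(ε) = sup_{|θ| ≤ θ_Λ} (θε − Λ(θ))`, the rate function `c` is nonnegative, strictly
convex and continuous on `[ε₋, ε₊]`, vanishes only at `0`, and
`(1/n) log ℙ_n(Sₙ > nε) → −c(ε)` for every `0 < ε < ε₊`. -/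
theorem stmt_11 {Ω : Type*} [MeasurableSpace Ω]
    (P : ℕ → Measure Ω) (hP : ∀ n, IsProbabilityMeasure (P n))
    (S : ℕ → Ω → ℝ) (hS : ∀ n, Measurable (S n))
    (θΛ : ℝ) (hθΛ : 0 < θΛ)
    (Λ Λ' : ℝ → ℝ)
    -- Λ is strictly convex and continuously differentiable on [−θ_Λ, θ_Λ], Λ'(0) = 0
    (hconv : StrictConvexOn ℝ (Set.Icc (-θΛ) θΛ) Λ)
    (hderiv : ∀ θ ∈ Set.Icc (-θΛ) θΛ, HasDerivWithinAt Λ (Λ' θ) (Set.Icc (-θΛ) θΛ) θ)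
    (hcont : ContinuousOn Λ' (Set.Icc (-θΛ) θΛ))
    (hΛ'0 : Λ' 0 = 0)
    -- the scaled cumulant generating functions converge to Λ on [−θ_Λ, θ_Λ]
    (hlim : ∀ θ ∈ Set.Icc (-θΛ) θΛ,
        Tendsto (fun n : ℕ => (n : ℝ)⁻¹ * Real.log (∫ ω, Real.exp (θ * S n ω) ∂(P n)))
          atTop (𝓝 (Λ θ))) :
    0 < Λ' θΛ ∧ Λ' (-θΛ) < 0 ∧
      ∀ c : ℝ → ℝ, (∀ ε : ℝ, c ε = ⨆ θ : Set.Icc (-θΛ) θΛ, ((θ : ℝ) * ε - Λ θ)) →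
        (∀ ε ∈ Set.Icc (Λ' (-θΛ)) (Λ' θΛ), 0 ≤ c ε) ∧
        StrictConvexOn ℝ (Set.Icc (Λ' (-θΛ)) (Λ' θΛ)) c ∧
        ContinuousOn c (Set.Icc (Λ' (-θΛ)) (Λ' θΛ)) ∧
        (∀ ε ∈ Set.Icc (Λ' (-θΛ)) (Λ' θΛ), (c ε = 0 ↔ ε = 0)) ∧
        ∀ ε : ℝ, 0 < ε → ε < Λ' θΛ →
          Tendsto (fun n : ℕ =>
              (n : ℝ)⁻¹ * Real.log ((P n {ω | (n : ℝ) * ε < S n ω}).toReal))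
            atTop (𝓝 (-(c ε))) := by
  classical
  have hm0 : (0:ℝ) ∈ Set.Icc (-θΛ) θΛ := ⟨by linarith, hθΛ.le⟩
  have hmT : θΛ ∈ Set.Icc (-θΛ) θΛ := ⟨by linarith, le_refl _⟩
  have hmN : -θΛ ∈ Set.Icc (-θΛ) θΛ := ⟨le_refl _, by linarith⟩
  have hΛcont : ContinuousOn Λ (Set.Icc (-θΛ) θΛ) := fun x hx => (hderiv x hx).continuousWithinAt
  have tangent_le : ∀ x ∈ Set.Icc (-θΛ) θΛ, ∀ y ∈ Set.Icc (-θΛ) θΛ,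
      Λ x + Λ' x * (y - x) ≤ Λ y :=
    fun x hx y hy => aux_tangent_le hconv.convexOn hx hy (hderiv x hx)
  have tangent_lt : ∀ x ∈ Set.Icc (-θΛ) θΛ, ∀ y ∈ Set.Icc (-θΛ) θΛ, y ≠ x →
      Λ x + Λ' x * (y - x) < Λ y :=
    fun x hx y hy hne => aux_tangent_lt hconv hx hy hne (hderiv x hx)
  have dmono : ∀ x ∈ Set.Icc (-θΛ) θΛ, ∀ y ∈ Set.Icc (-θΛ) θΛ, x < y → Λ' x < Λ' y := by
    intro x hx y hy hxy
    have h1 := hconv.lt_slope_of_hasDerivWithinAt hx hy hxy (hderiv x hx)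
    have h2 := hconv.slope_lt_of_hasDerivWithinAt hx hy hxy (hderiv y hy)
    linarith
  have hΛ0 : Λ 0 = 0 := by
    have h1 := hlim 0 hm0
    have h2 : (fun n : ℕ => (n:ℝ)⁻¹ * Real.log (∫ ω, Real.exp (0 * S n ω) ∂(P n)))
        = fun _ : ℕ => (0:ℝ) := by
      funext n
      haveI := hP n
      simp
    rw [h2] at h1
    exact (tendsto_nhds_unique h1 tendsto_const_nhds)
  have hΛnn : ∀ θ ∈ Set.Icc (-θΛ) θΛ, 0 ≤ Λ θ := by
    intro θ hθ
    have := tangent_le 0 hm0 θ hθ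
    rw [hΛ0, hΛ'0] at this
    linarith
  have hΛpos : ∀ θ ∈ Set.Icc (-θΛ) θΛ, θ ≠ 0 → 0 < Λ θ := by
    intro θ hθ hne
    have := tangent_lt 0 hm0 θ hθ hne
    rw [hΛ0, hΛ'0] at this
    linarith
  have hεp : 0 < Λ' θΛ := by
    have := dmono 0 hm0 θΛ hmT hθΛ
    rw [hΛ'0] at this; exact this
  have hεm : Λ' (-θΛ) < 0 := by
    have := dmono (-θΛ) hmN 0 hm0 (by linarith)
    rw [hΛ'0] at this; exact this
  refine ⟨hεp, hεm, ?_⟩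
  intro c hc
  haveI : Nonempty (Set.Icc (-θΛ) θΛ) := ⟨⟨0, hm0⟩⟩
  have hbdd : ∀ ε : ℝ, BddAbove (Set.range fun θ : Set.Icc (-θΛ) θΛ => (θ:ℝ) * ε - Λ θ) := by
    intro ε
    have hg : ContinuousOn (fun θ : ℝ => θ * ε - Λ θ) (Set.Icc (-θΛ) θΛ) :=
      (continuousOn_id.mul continuousOn_const).sub hΛcont
    have := (isCompact_Icc.image_of_continuousOn hg).bddAbove
    rwa [Set.image_eq_range] at this
  have hlec : ∀ ε : ℝ, ∀ θ ∈ Set.Icc (-θΛ) θΛ, θ * ε - Λ θ ≤ c ε := by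
    intro ε θ hθ
    rw [hc ε]
    exact le_ciSup (hbdd ε) ⟨θ, hθ⟩
  have hcle : ∀ ε M : ℝ, (∀ θ ∈ Set.Icc (-θΛ) θΛ, θ * ε - Λ θ ≤ M) → c ε ≤ M := by
    intro ε M h
    rw [hc ε]
    exact ciSup_le fun θ => h θ θ.2
  have hcnn : ∀ ε : ℝ, 0 ≤ c ε := by
    intro ε
    have := hlec ε 0 hm0
    rw [hΛ0] at this
    linarith
  have hmax : ∀ ε ∈ Set.Icc (Λ' (-θΛ)) (Λ' θΛ),
      ∃ θ0 ∈ Set.Icc (-θΛ) θΛ, Λ' θ0 = ε ∧ c ε = θ0 * ε - Λ θ0 := by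
    intro ε hε
    obtain ⟨θ0, hθ0, hv⟩ := intermediate_value_Icc (by linarith : -θΛ ≤ θΛ) hcont hε
    refine ⟨θ0, hθ0, hv, le_antisymm (hcle ε _ ?_) (hlec ε θ0 hθ0)⟩
    intro θ hθ
    have h1 := tangent_le θ0 hθ0 θ hθ
    rw [hv] at h1
    nlinarith [h1]
  have hsc : StrictConvexOn ℝ (Set.Icc (Λ' (-θΛ)) (Λ' θΛ)) c := by
    refine ⟨convex_Icc _ _, ?_⟩
    intro x hx y hy hxy a b ha hb hab
    have hz : a • x + b • y ∈ Set.Icc (Λ' (-θΛ)) (Λ' θΛ) :=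
      (convex_Icc _ _) hx hy ha.le hb.le hab
    obtain ⟨θz, hθzI, hθz, hcz⟩ := hmax _ hz
    obtain ⟨θx, hθxI, hθx, hcx⟩ := hmax _ hx
    simp only [smul_eq_mul] at *
    have hzx : a * x + b * y ≠ x := by
      intro h
      apply hxy
      have hb' : b * y = b * x := by linear_combination h - x * hab
      exact (mul_left_cancel₀ hb.ne' hb').symm
    have hθne : θz ≠ θx := by
      intro h
      rw [h, hθx] at hθz
      exact hzx hθz.symm
    have key : θz * x - Λ θz < c x := by
      have h1 := tangent_lt θx hθxI θz hθzI hθne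
      rw [hθx] at h1
      rw [hcx]
      nlinarith [h1]
    have key2 : θz * y - Λ θz ≤ c y := hlec y θz hθzI
    rw [hcz]
    have e : θz * (a * x + b * y) - Λ θz
        = a * (θz * x - Λ θz) + b * (θz * y - Λ θz) := by
      linear_combination (Λ θz) * hab
    rw [e]
    have k1 := mul_lt_mul_of_pos_left key ha
    have k2 := mul_le_mul_of_nonneg_left key2 hb.le
    linarith
  have hlip : ∀ p q : ℝ, c p ≤ c q + θΛ * |p - q| := by
    intro p q
    apply hcle
    intro θ hθ
    have h1 := hlec q θ hθ
    have h2 : θ * (p - q) ≤ θΛ * |p - q| := by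
      calc θ * (p - q) ≤ |θ * (p - q)| := le_abs_self _
        _ = |θ| * |p - q| := abs_mul _ _
        _ ≤ θΛ * |p - q| := by
            apply mul_le_mul_of_nonneg_right _ (abs_nonneg _)
            exact abs_le.mpr ⟨hθ.1, hθ.2⟩
    have e : θ * p - Λ θ = (θ * q - Λ θ) + θ * (p - q) := by ring
    linarith
  have hccont : Continuous c := by
    have hL : LipschitzWith (Real.toNNReal θΛ) c := by
      apply LipschitzWith.of_dist_le_mul
      intro p q
      rw [Real.dist_eq, Real.dist_eq, Real.coe_toNNReal _ hθΛ.le, abs_sub_le_iff]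
      constructor
      · have := hlip p q; linarith
      · have h := hlip q p
        rw [abs_sub_comm] at h
        linarith
    exact hL.continuous
  have hc0 : c 0 = 0 := by
    refine le_antisymm (hcle 0 0 ?_) (hcnn 0)
    intro θ hθ
    have := hΛnn θ hθ
    simp only [zero_mul, mul_zero]
    linarith
  have hciff : ∀ ε ∈ Set.Icc (Λ' (-θΛ)) (Λ' θΛ), (c ε = 0 ↔ ε = 0) := by
    intro ε hε
    constructor
    · intro h0
      by_contra hne
      have h0mem : (0:ℝ) ∈ Set.Icc (Λ' (-θΛ)) (Λ' θΛ) := ⟨hεm.le, hεp.le⟩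
      have hmid := hsc.2 h0mem hε (Ne.symm hne) (by norm_num : (0:ℝ) < 1/2)
        (by norm_num : (0:ℝ) < 1/2) (by norm_num)
      simp only [smul_eq_mul] at hmid
      rw [hc0, h0] at hmid
      have := hcnn ((1/2) * 0 + (1/2) * ε)
      linarith
    · intro h; rw [h, hc0]
  refine ⟨fun ε _ => hcnn ε, hsc, hccont.continuousOn, hciff, ?_⟩
  -- ================= the large deviation limit =================
  intro ε hε0 hεlt
  obtain ⟨θs, hθsI, hθs, hcε⟩ := hmax ε ⟨by linarith, hεlt.le⟩
  have hθs0 : 0 < θs := by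
    rcases lt_trichotomy θs 0 with h | h | h
    · have := dmono θs hθsI 0 hm0 h
      rw [hΛ'0, hθs] at this
      linarith
    · rw [h, hΛ'0] at hθs; linarith
    · exact h
  have hθsT : θs < θΛ := by
    rcases lt_or_eq_of_le hθsI.2 with h | h
    · exact h
    · exfalso; rw [h] at hθs; linarith
  have hcεpos : 0 < c ε := by
    rcases (hcnn ε).lt_or_eq with h | h
    · exact h
    · exact absurd ((hciff ε ⟨by linarith, hεlt.le⟩).mp h.symm) (ne_of_gt hε0)
  set Z : ℝ → ℕ → ℝ := fun θ n => ∫ ω, Real.exp (θ * S n ω) ∂(P n) with hZdef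
  have hlimZ : ∀ θ ∈ Set.Icc (-θΛ) θΛ,
      Tendsto (fun n : ℕ => (n:ℝ)⁻¹ * Real.log (Z θ n)) atTop (𝓝 (Λ θ)) := hlim
  have hInt : ∀ θ ∈ Set.Icc (-θΛ) θΛ,
      ∀ᶠ n in atTop, Integrable (fun ω => Real.exp (θ * S n ω)) (P n) := by
    intro θ hθ
    rcases eq_or_ne θ 0 with rfl | hne
    · refine Eventually.of_forall fun n => ?_
      haveI := hP n
      simpa using integrable_const (1:ℝ)
    · have hpos := hΛpos θ hθ hne
      filter_upwards [(hlimZ θ hθ).eventually (eventually_gt_nhds (half_lt_self hpos))] with n hn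
      by_contra hni
      have h0 : Z θ n = 0 := integral_undef hni
      rw [h0] at hn
      simp at hn
      linarith
  have hZpos : ∀ (θ : ℝ) (n : ℕ), Integrable (fun ω => Real.exp (θ * S n ω)) (P n) →
      0 < Z θ n := by
    intro θ n hint
    haveI := hP n
    show 0 < ∫ ω, Real.exp (θ * S n ω) ∂(P n)
    rw [integral_pos_iff_support_of_nonneg (fun ω => (Real.exp_pos _).le) hint]
    have hs' : Function.support (fun ω => Real.exp (θ * S n ω)) = Set.univ := by
      ext ω; simp [Function.support, Real.exp_ne_zero]
    rw [hs']
    simp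
  have tilt_bound : ∀ (n : ℕ) (θ θ₁ θ₂ m : ℝ) (A : Set Ω), MeasurableSet A →
      θ = θ₁ + θ₂ →
      Integrable (fun ω => Real.exp (θ₁ * S n ω)) (P n) →
      Integrable (fun ω => Real.exp (θ * S n ω)) (P n) →
      (∀ ω ∈ A, θ₂ * S n ω ≤ θ₂ * m) →
      ∫ ω in A, Real.exp (θ * S n ω) ∂(P n) ≤ Real.exp (θ₂ * m) * Z θ₁ n := by
    intro n θ θ₁ θ₂ m A hA heq hint1 hint hbd
    haveI := hP n
    have step1 : ∫ ω in A, Real.exp (θ * S n ω) ∂(P n)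
        ≤ ∫ ω in A, Real.exp (θ₂ * m) * Real.exp (θ₁ * S n ω) ∂(P n) := by
      refine setIntegral_mono_on hint.integrableOn (hint1.const_mul _).integrableOn hA ?_
      intro ω hω
      rw [← Real.exp_add]
      apply Real.exp_le_exp.mpr
      have hb := hbd ω hω
      rw [heq]
      nlinarith [hb]
    have step2 : ∫ ω in A, Real.exp (θ₂ * m) * Real.exp (θ₁ * S n ω) ∂(P n)
        = Real.exp (θ₂ * m) * ∫ ω in A, Real.exp (θ₁ * S n ω) ∂(P n) :=
      integral_const_mul _ _
    have step3 : ∫ ω in A, Real.exp (θ₁ * S n ω) ∂(P n) ≤ Z θ₁ n :=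
      setIntegral_le_integral hint1 (Eventually.of_forall fun ω => (Real.exp_pos _).le)
    calc ∫ ω in A, Real.exp (θ * S n ω) ∂(P n) ≤ _ := step1
      _ = _ := step2
      _ ≤ Real.exp (θ₂ * m) * Z θ₁ n :=
        mul_le_mul_of_nonneg_left step3 (Real.exp_pos _).le
  have main : ∀ δ : ℝ, 0 < δ → ∀ᶠ n : ℕ in atTop,
      -(c ε) - δ ≤ (n:ℝ)⁻¹ * Real.log ((P n {ω | (n:ℝ) * ε < S n ω}).toReal) ∧
      0 < (P n {ω | (n:ℝ) * ε < S n ω}).toReal := by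
    intro δ hδ
    obtain ⟨ρ, hρmem, hρF⟩ : ∃ ρ : ℝ, ρ ∈ Set.Ioo 0 (θΛ - θs) ∧
        (θs + ρ) * (Λ' (θs + ρ) + ρ) - Λ (θs + ρ) < c ε + δ / 2 := by
      have hd : (0:ℝ) < θΛ - θs := by linarith
      have hmaps : Set.MapsTo (fun ρ : ℝ => θs + ρ) (Set.Icc 0 (θΛ - θs))
          (Set.Icc (-θΛ) θΛ) := by
        intro ρ hρ
        simp only [Set.mem_Icc] at *
        constructor
        · linarith [hρ.1, hθs0]
        · linarith [hρ.2]
      have h1 : ContinuousOn (fun ρ : ℝ => θs + ρ) (Set.Icc 0 (θΛ - θs)) :=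
        (continuous_const.add continuous_id).continuousOn
      have hFcont : ContinuousOn
          (fun ρ : ℝ => (θs + ρ) * (Λ' (θs + ρ) + ρ) - Λ (θs + ρ)) (Set.Icc 0 (θΛ - θs)) :=
        (h1.mul ((hcont.comp h1 hmaps).add continuousOn_id)).sub (hΛcont.comp h1 hmaps)
      have h0mem : (0:ℝ) ∈ Set.Icc (0:ℝ) (θΛ - θs) := ⟨le_refl _, hd.le⟩
      have hF0 : (θs + 0) * (Λ' (θs + 0) + 0) - Λ (θs + 0) < c ε + δ / 2 := by
        simp only [add_zero]
        rw [hθs, hcε]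
        linarith
      have hev : ∀ᶠ ρ in 𝓝[Set.Icc (0:ℝ) (θΛ - θs)] 0,
          (θs + ρ) * (Λ' (θs + ρ) + ρ) - Λ (θs + ρ) < c ε + δ / 2 :=
        (hFcont 0 h0mem).eventually (eventually_lt_nhds hF0)
      have hne : (𝓝[Set.Ioo (0:ℝ) (θΛ - θs)] 0).NeBot := by
        rw [← mem_closure_iff_nhdsWithin_neBot, closure_Ioo hd.ne]
        exact ⟨le_refl _, hd.le⟩
      have hev' := hev.filter_mono (nhdsWithin_mono 0 Set.Ioo_subset_Icc_self)
      obtain ⟨ρ, h₁, h₂⟩ := (hev'.and eventually_mem_nhdsWithin).exists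
      exact ⟨ρ, h₂, h₁⟩
    obtain ⟨hρ0, hρd⟩ := hρmem
    set η := θs + ρ with hηdef
    have hη0 : 0 < η := by rw [hηdef]; linarith
    have hηT : η < θΛ := by rw [hηdef]; linarith
    have hηI : η ∈ Set.Icc (-θΛ) θΛ := ⟨by linarith, hηT.le⟩
    set ε'' := Λ' η + ρ with hε''def
    clear_value η ε''
    have hη'ε : ε < Λ' η := by
      have := dmono θs hθsI η hηI (by rw [hηdef]; linarith)
      rw [hθs] at this; exact this
    have hεε'' : ε < ε'' := by rw [hε''def]; linarith
    have ht0 : 0 < ρ / 2 := by linarith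
    have hηtI : η - ρ/2 ∈ Set.Icc (-θΛ) θΛ := ⟨by rw [hηdef]; linarith, by linarith [hηT]⟩
    have hmid : ε < Λ' (η - ρ/2) := by
      have := dmono θs hθsI (η - ρ/2) hηtI (by rw [hηdef]; linarith)
      rw [hθs] at this; exact this
    obtain ⟨s, hs0, hsT, hsΛ⟩ : ∃ s : ℝ, 0 < s ∧ η + s ≤ θΛ ∧ Λ' (η + s) < ε'' := by
      have hevs : ∀ᶠ y in 𝓝[Set.Icc (-θΛ) θΛ] η, Λ' y < ε'' :=
        (hcont η hηI).eventually (eventually_lt_nhds (by rw [hε''def]; linarith))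
      have hsub : Set.Ioo η θΛ ⊆ Set.Icc (-θΛ) θΛ := by
        intro y hy
        exact ⟨by linarith [hy.1, hηI.1], hy.2.le⟩
      have hne : (𝓝[Set.Ioo η θΛ] η).NeBot := by
        rw [← mem_closure_iff_nhdsWithin_neBot, closure_Ioo (ne_of_lt hηT)]
        exact ⟨le_refl _, hηT.le⟩
      have hev' := hevs.filter_mono (nhdsWithin_mono η hsub)
      obtain ⟨y, h₁, h₂⟩ := (hev'.and eventually_mem_nhdsWithin).exists
      refine ⟨y - η, by linarith [h₂.1], by linarith [h₂.2], ?_⟩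
      rw [show η + (y - η) = y by ring]
      exact h₁
    have hηsI : η + s ∈ Set.Icc (-θΛ) θΛ := ⟨by linarith, hsT⟩
    have hrate1 : ρ/2 * ε + Λ (η - ρ/2) - Λ η < 0 := by
      have h1 := tangent_le (η - ρ/2) hηtI η hηI
      rw [show η - (η - ρ/2) = ρ/2 by ring] at h1
      nlinarith [mul_lt_mul_of_pos_left hmid ht0]
    have hrate2 : -(s * ε'') + Λ (η + s) - Λ η < 0 := by
      have h1 := tangent_le (η + s) hηsI η hηI
      rw [show η - (η + s) = -s by ring] at h1
      nlinarith [mul_lt_mul_of_pos_left hsΛ hs0]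
    have hinv : Tendsto (fun n : ℕ => ((n:ℝ))⁻¹) atTop (𝓝 0) :=
      tendsto_inv_atTop_nhds_zero_nat
    have hinv4 : Tendsto (fun n : ℕ => ((n:ℝ))⁻¹ * Real.log 4) atTop (𝓝 0) := by
      simpa using hinv.mul_const (Real.log 4)
    have hinv2 : Tendsto (fun n : ℕ => ((n:ℝ))⁻¹ * Real.log 2) atTop (𝓝 0) := by
      simpa using hinv.mul_const (Real.log 2)
    have hu1 : Tendsto (fun n : ℕ => ρ/2 * ε + (n:ℝ)⁻¹ * Real.log (Z (η - ρ/2) n)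
        + (n:ℝ)⁻¹ * Real.log 4 - (n:ℝ)⁻¹ * Real.log (Z η n)) atTop
        (𝓝 (ρ/2 * ε + Λ (η - ρ/2) + 0 - Λ η)) :=
      ((tendsto_const_nhds.add (hlimZ _ hηtI)).add hinv4).sub (hlimZ _ hηI)
    have hev1 : ∀ᶠ n : ℕ in atTop, ρ/2 * ε + (n:ℝ)⁻¹ * Real.log (Z (η - ρ/2) n)
        + (n:ℝ)⁻¹ * Real.log 4 - (n:ℝ)⁻¹ * Real.log (Z η n) < 0 :=
      hu1.eventually (eventually_lt_nhds (show ρ/2 * ε + Λ (η - ρ/2) + 0 - Λ η < 0 by linarith))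
    have hu2 : Tendsto (fun n : ℕ => -(s * ε'') + (n:ℝ)⁻¹ * Real.log (Z (η + s) n)
        + (n:ℝ)⁻¹ * Real.log 4 - (n:ℝ)⁻¹ * Real.log (Z η n)) atTop
        (𝓝 (-(s * ε'') + Λ (η + s) + 0 - Λ η)) :=
      ((tendsto_const_nhds.add (hlimZ _ hηsI)).add hinv4).sub (hlimZ _ hηI)
    have hev2 : ∀ᶠ n : ℕ in atTop, -(s * ε'') + (n:ℝ)⁻¹ * Real.log (Z (η + s) n)
        + (n:ℝ)⁻¹ * Real.log 4 - (n:ℝ)⁻¹ * Real.log (Z η n) < 0 :=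
      hu2.eventually (eventually_lt_nhds (show -(s * ε'') + Λ (η + s) + 0 - Λ η < 0 by linarith))
    have hv : Tendsto (fun n : ℕ => -(η * ε'') + (n:ℝ)⁻¹ * Real.log (Z η n)
        - (n:ℝ)⁻¹ * Real.log 2) atTop (𝓝 (-(η * ε'') + Λ η - 0)) :=
      (tendsto_const_nhds.add (hlimZ _ hηI)).sub hinv2
    have hev3 : ∀ᶠ n : ℕ in atTop, -(c ε) - δ < -(η * ε'') + (n:ℝ)⁻¹ * Real.log (Z η n)
        - (n:ℝ)⁻¹ * Real.log 2 :=
      hv.eventually (eventually_gt_nhds (show -(c ε) - δ < -(η * ε'') + Λ η - 0 by linarith))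
    filter_upwards [hInt η hηI, hInt _ hηtI, hInt _ hηsI, hev1, hev2, hev3,
      eventually_ge_atTop 1] with n hIη hIt hIs h1 h2 h3 hn1
    haveI := hP n
    have hn0 : (0:ℝ) < n := by
      have : (1:ℝ) ≤ n := by exact_mod_cast hn1
      linarith
    have hne' : (n:ℝ) ≠ 0 := ne_of_gt hn0
    set As := {ω | S n ω ≤ (n:ℝ) * ε} with hAs
    set Bs := {ω | (n:ℝ) * ε'' < S n ω} with hBs
    have hAmeas : MeasurableSet As := measurableSet_le (hS n) measurable_const
    have hBmeas : MeasurableSet Bs := measurableSet_lt measurable_const (hS n)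
    have hZηpos := hZpos η n hIη
    have hZtpos := hZpos _ n hIt
    have hZspos := hZpos _ n hIs
    have hA1 : ∫ ω in As, Real.exp (η * S n ω) ∂(P n)
        ≤ Real.exp (ρ/2 * ((n:ℝ) * ε)) * Z (η - ρ/2) n :=
      tilt_bound n η (η - ρ/2) (ρ/2) ((n:ℝ) * ε) As hAmeas (by ring) hIt hIη
        (fun ω hω => mul_le_mul_of_nonneg_left hω ht0.le)
    have k1 := aux_mul_neg hn0 h1
    have hA2 : Real.exp (ρ/2 * ((n:ℝ) * ε)) * Z (η - ρ/2) n ≤ Z η n / 4 := by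
      have e := Real.exp_lt_exp.mpr (show (n:ℝ) * (ρ/2 * ε) + Real.log (Z (η - ρ/2) n)
          + Real.log 4 < Real.log (Z η n) by linarith)
      rw [Real.exp_add, Real.exp_add, Real.exp_log hZtpos, Real.exp_log hZηpos,
        Real.exp_log (by norm_num : (0:ℝ) < 4)] at e
      rw [show ρ/2 * ((n:ℝ) * ε) = (n:ℝ) * (ρ/2 * ε) by ring]
      linarith
    have hB1 : ∫ ω in Bs, Real.exp (η * S n ω) ∂(P n)
        ≤ Real.exp (-s * ((n:ℝ) * ε'')) * Z (η + s) n :=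
      tilt_bound n η (η + s) (-s) ((n:ℝ) * ε'') Bs hBmeas (by ring) hIs hIη
        (fun ω hω => mul_le_mul_of_nonpos_left (le_of_lt hω) (by linarith : -s ≤ 0))
    have k2 := aux_mul_neg hn0 h2
    have hB2 : Real.exp (-s * ((n:ℝ) * ε'')) * Z (η + s) n ≤ Z η n / 4 := by
      have e := Real.exp_lt_exp.mpr (show (n:ℝ) * (-(s * ε'')) + Real.log (Z (η + s) n)
          + Real.log 4 < Real.log (Z η n) by linarith)
      rw [Real.exp_add, Real.exp_add, Real.exp_log hZspos, Real.exp_log hZηpos,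
        Real.exp_log (by norm_num : (0:ℝ) < 4)] at e
      rw [show -s * ((n:ℝ) * ε'') = (n:ℝ) * (-(s * ε'')) by ring]
      linarith
    have hdisj : Disjoint As Bs := by
      rw [Set.disjoint_left]
      intro ω hωA hωB
      have h' : (n:ℝ) * ε < (n:ℝ) * ε'' := mul_lt_mul_of_pos_left hεε'' hn0
      simp only [hAs, hBs, Set.mem_setOf_eq] at hωA hωB
      linarith
    have htot : (∫ ω, Real.exp (η * S n ω) ∂(P n)) = Z η n := rfl
    have hsplit := integral_add_compl (hAmeas.union hBmeas) hIη
    rw [htot] at hsplit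
    have hunion : ∫ ω in As ∪ Bs, Real.exp (η * S n ω) ∂(P n)
        = ∫ ω in As, Real.exp (η * S n ω) ∂(P n)
          + ∫ ω in Bs, Real.exp (η * S n ω) ∂(P n) :=
      setIntegral_union hdisj hBmeas hIη.integrableOn hIη.integrableOn
    have hMlb : Z η n / 2 ≤ ∫ ω in (As ∪ Bs)ᶜ, Real.exp (η * S n ω) ∂(P n) := by
      linarith
    have hMmeas : MeasurableSet ((As ∪ Bs)ᶜ) := (hAmeas.union hBmeas).compl
    have hPM : Real.exp (-(η * ((n:ℝ) * ε''))) *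
        ∫ ω in (As ∪ Bs)ᶜ, Real.exp (η * S n ω) ∂(P n)
        ≤ (P n ((As ∪ Bs)ᶜ)).toReal := by
      have step : ∫ ω in (As ∪ Bs)ᶜ, Real.exp (-(η * ((n:ℝ) * ε''))) * Real.exp (η * S n ω) ∂(P n)
          ≤ ∫ _ω in (As ∪ Bs)ᶜ, (1:ℝ) ∂(P n) := by
        refine setIntegral_mono_on ((hIη.const_mul _).integrableOn)
          (integrableOn_const (measure_ne_top _ _)) hMmeas ?_
        intro ω hω
        simp only [hAs, hBs, Set.mem_compl_iff, Set.mem_union, Set.mem_setOf_eq,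
          not_or, not_le, not_lt] at hω
        rw [← Real.exp_add]
        have hb : η * S n ω ≤ η * ((n:ℝ) * ε'') := mul_le_mul_of_nonneg_left hω.2 hη0.le
        calc Real.exp (-(η * ((n:ℝ) * ε'')) + η * S n ω) ≤ Real.exp 0 :=
              Real.exp_le_exp.mpr (by linarith)
          _ = 1 := Real.exp_zero
      rw [integral_const_mul] at step
      have e1 : ∫ _ω in (As ∪ Bs)ᶜ, (1:ℝ) ∂(P n) = (P n ((As ∪ Bs)ᶜ)).toReal := by
        rw [setIntegral_const, smul_eq_mul, mul_one]; rfl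
      rw [e1] at step
      exact step
    have hPmono : (P n ((As ∪ Bs)ᶜ)).toReal ≤ (P n {ω | (n:ℝ) * ε < S n ω}).toReal := by
      refine (ENNReal.toReal_le_toReal (measure_ne_top _ _) (measure_ne_top _ _)).mpr ?_
      apply measure_mono
      intro ω hω
      simp only [hAs, hBs, Set.mem_compl_iff, Set.mem_union, Set.mem_setOf_eq,
        not_or, not_le, not_lt] at hω
      exact hω.1
    have hLb : Real.exp (-(η * ((n:ℝ) * ε''))) * (Z η n / 2)
        ≤ (P n {ω | (n:ℝ) * ε < S n ω}).toReal :=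
      le_trans (le_trans (mul_le_mul_of_nonneg_left hMlb (Real.exp_pos _).le) hPM) hPmono
    have hLbpos : 0 < Real.exp (-(η * ((n:ℝ) * ε''))) * (Z η n / 2) :=
      mul_pos (Real.exp_pos _) (by linarith)
    have hPpos : 0 < (P n {ω | (n:ℝ) * ε < S n ω}).toReal := lt_of_lt_of_le hLbpos hLb
    refine ⟨?_, hPpos⟩
    have hlogP : -(η * ((n:ℝ) * ε'')) + Real.log (Z η n) - Real.log 2
        ≤ Real.log ((P n {ω | (n:ℝ) * ε < S n ω}).toReal) := by
      have hl := Real.log_le_log hLbpos hLb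
      rw [Real.log_mul (Real.exp_ne_zero _) (by linarith), Real.log_exp,
        Real.log_div (ne_of_gt hZηpos) (by norm_num)] at hl
      linarith
    have emul : (n:ℝ)⁻¹ * (-(η * ((n:ℝ) * ε'')) + Real.log (Z η n) - Real.log 2)
        = -(η * ε'') + (n:ℝ)⁻¹ * Real.log (Z η n) - (n:ℝ)⁻¹ * Real.log 2 := by
      field_simp
    have hfin := mul_le_mul_of_nonneg_left hlogP (inv_nonneg.mpr hn0.le)
    rw [emul] at hfin
    linarith
  have hupper : ∀ δ : ℝ, 0 < δ → ∀ᶠ n : ℕ in atTop,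
      (n:ℝ)⁻¹ * Real.log ((P n {ω | (n:ℝ) * ε < S n ω}).toReal) ≤ -(c ε) + δ := by
    intro δ hδ
    have hten : Tendsto (fun n : ℕ => -(θs * ε) + (n:ℝ)⁻¹ * Real.log (Z θs n)) atTop
        (𝓝 (-(θs * ε) + Λ θs)) := tendsto_const_nhds.add (hlimZ θs hθsI)
    have hlt : -(θs * ε) + Λ θs < -(c ε) + δ := by
      rw [hcε]; linarith
    filter_upwards [hten.eventually (eventually_lt_nhds hlt), hInt θs hθsI,
      main 1 one_pos, eventually_ge_atTop 1] with n hlt' hIθ hm1 hn1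
    haveI := hP n
    have hn0 : (0:ℝ) < n := by
      have : (1:ℝ) ≤ n := by exact_mod_cast hn1
      linarith
    have hne' : (n:ℝ) ≠ 0 := ne_of_gt hn0
    have hPpos := hm1.2
    have hAm : MeasurableSet {ω | (n:ℝ) * ε < S n ω} := measurableSet_lt measurable_const (hS n)
    have hZp := hZpos θs n hIθ
    have hch : Real.exp (θs * ((n:ℝ) * ε)) * (P n {ω | (n:ℝ) * ε < S n ω}).toReal ≤ Z θs n := by
      have e1 : Real.exp (θs * ((n:ℝ) * ε)) * (P n {ω | (n:ℝ) * ε < S n ω}).toReal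
          = ∫ _ω in {ω | (n:ℝ) * ε < S n ω}, Real.exp (θs * ((n:ℝ) * ε)) ∂(P n) := by
        rw [setIntegral_const, smul_eq_mul, mul_comm]; rfl
      rw [e1]
      have e2 : ∫ _ω in {ω | (n:ℝ) * ε < S n ω}, Real.exp (θs * ((n:ℝ) * ε)) ∂(P n)
          ≤ ∫ ω in {ω | (n:ℝ) * ε < S n ω}, Real.exp (θs * S n ω) ∂(P n) := by
        refine setIntegral_mono_on (integrableOn_const (measure_ne_top _ _))
          hIθ.integrableOn hAm ?_
        intro ω hω
        exact Real.exp_le_exp.mpr (mul_le_mul_of_nonneg_left (le_of_lt hω) hθs0.le)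
      exact e2.trans (setIntegral_le_integral hIθ
        (Eventually.of_forall fun ω => (Real.exp_pos _).le))
    have hP' : (P n {ω | (n:ℝ) * ε < S n ω}).toReal
        ≤ Real.exp (-(θs * ((n:ℝ) * ε))) * Z θs n := by
      rw [Real.exp_neg, inv_mul_eq_div, le_div_iff₀ (Real.exp_pos _)]
      linarith [hch]
    have hlog := Real.log_le_log hPpos hP'
    rw [Real.log_mul (Real.exp_ne_zero _) (ne_of_gt hZp), Real.log_exp] at hlog
    have emul : (n:ℝ)⁻¹ * (-(θs * ((n:ℝ) * ε)) + Real.log (Z θs n))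
        = -(θs * ε) + (n:ℝ)⁻¹ * Real.log (Z θs n) := by
      field_simp
    have hstep := mul_le_mul_of_nonneg_left hlog (inv_nonneg.mpr hn0.le)
    rw [emul] at hstep
    linarith
  rw [Metric.tendsto_nhds]
  intro r hr
  filter_upwards [main (r/2) (by linarith), hupper (r/2) (by linarith)] with n h1 h2
  rw [Real.dist_eq, abs_sub_lt_iff]
  constructor
  · linarith [h2]
  · linarith [h1.1]
end

section
/- Fix 0 < α ≤ 1, ε₀ > 0, and a compact set M ⊂ ℝ^d. The quasi-Hölder space V_α(M), equipped with the norm ‖f‖_α = ‖f‖_{L¹} + |f|_α, is a Banach algebra under pointwise multiplication: there exists a constant C > 0 (depending only on α, ε₀, d, M) such that for all f, g ∈ V_α(M), the product fg belongs to V_α(M) and ‖fg‖_α ≤ C ‖f‖_α ‖g‖_α. -/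
open MeasureTheory Filter Topology
open scoped ENNReal
set_option maxHeartbeats 1000000

/-- The oscillation of `f` over `A` : the essential supremum of `|f x₁ − f x₂|` over
`A × A`, with respect to the product of the restrictions of Lebesgue measure to `A`. -/
noncomputable def qhOsc {d : ℕ} (f : EuclideanSpace ℝ (Fin d) → ℝ)
    (A : Set (EuclideanSpace ℝ (Fin d))) : ℝ≥0∞ :=
  essSup (fun p : EuclideanSpace ℝ (Fin d) × EuclideanSpace ℝ (Fin d) =>
      (‖f p.1 - f p.2‖₊ : ℝ≥0∞))
    (((volume : Measure (EuclideanSpace ℝ (Fin d))).restrict A).prod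
      ((volume : Measure (EuclideanSpace ℝ (Fin d))).restrict A))

/-- The quasi-Hölder seminorm `|f|_α = sup_{0 < ε ≤ ε₀} ε^{−α} ∫ osc(f, B_ε(x)) dx`. -/
noncomputable def qhSeminorm {d : ℕ} (α ε₀ : ℝ)
    (f : EuclideanSpace ℝ (Fin d) → ℝ) : ℝ≥0∞ :=
  ⨆ ε ∈ Set.Ioc (0 : ℝ) ε₀,
    ENNReal.ofReal (ε ^ (-α)) * ∫⁻ x, qhOsc f (Metric.closedBall x ε) ∂volume

/-- Membership in the quasi-Hölder space `V_α(M)` : `f ∈ L¹(ℝ^d)`, `|f|_α < ∞` and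
`supp f ⊂ M`. -/
def memVα {d : ℕ} (α ε₀ : ℝ) (M : Set (EuclideanSpace ℝ (Fin d)))
    (f : EuclideanSpace ℝ (Fin d) → ℝ) : Prop :=
  Integrable f volume ∧ qhSeminorm α ε₀ f ≠ ∞ ∧ Function.support f ⊆ M

/-- The quasi-Hölder norm `‖f‖_α = ‖f‖_{L¹} + |f|_α`. -/
noncomputable def qhNorm {d : ℕ} (α ε₀ : ℝ) (f : EuclideanSpace ℝ (Fin d) → ℝ) : ℝ :=
  (∫ x, |f x|) + (qhSeminorm α ε₀ f).toReal

section Aux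

variable {d : ℕ}

local notation "E'" => EuclideanSpace ℝ (Fin d)
local notation "μv" => (volume : MeasureTheory.Measure (EuclideanSpace ℝ (Fin d)))

lemma qhOsc_eq (f : E' → ℝ) (A : Set E') :
    qhOsc f A = essSup (fun p : E' × E' => (‖f p.1 - f p.2‖₊ : ℝ≥0∞))
      ((Measure.prod μv μv).restrict (A ×ˢ A)) := by
  rw [qhOsc, Measure.prod_restrict]

lemma qhOsc_mono (f : E' → ℝ) {A B : Set E'} (h : A ⊆ B) : qhOsc f A ≤ qhOsc f B := by
  rw [qhOsc_eq, qhOsc_eq]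
  exact essSup_mono_measure' (Measure.restrict_mono (Set.prod_mono h h) le_rfl)

lemma qhOsc_le_iSup_of_monotone (f : E' → ℝ) {A : ℕ → Set E'}
    (hA : ∀ n, MeasurableSet (A n)) (hmono : Monotone A) :
    qhOsc f (⋃ n, A n) ≤ ⨆ n, qhOsc f (A n) := by
  set S := ⨆ n, qhOsc f (A n) with hS
  rw [qhOsc_eq]
  have hUm : MeasurableSet ((⋃ n, A n) ×ˢ (⋃ n, A n)) :=
    (MeasurableSet.iUnion hA).prod (MeasurableSet.iUnion hA)
  have hprod : (⋃ n, A n) ×ˢ (⋃ n, A n) ⊆ ⋃ n, A n ×ˢ A n := by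
    rintro ⟨a, b⟩ ⟨ha, hb⟩
    simp only [Set.mem_iUnion] at *
    obtain ⟨i, hi⟩ := ha; obtain ⟨j, hj⟩ := hb
    exact ⟨max i j, hmono (le_max_left i j) hi, hmono (le_max_right i j) hj⟩
  have key : ∀ n, (Measure.prod μv μv)
      ({p : E' × E' | ¬ (‖f p.1 - f p.2‖₊ : ℝ≥0∞) ≤ S} ∩ A n ×ˢ A n) = 0 := by
    intro n
    rw [← Measure.restrict_apply' ((hA n).prod (hA n))]
    have hae : ∀ᵐ p ∂(Measure.prod μv μv).restrict (A n ×ˢ A n),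
        (‖f p.1 - f p.2‖₊ : ℝ≥0∞) ≤ S := by
      have hOn : essSup (fun p : E' × E' => (‖f p.1 - f p.2‖₊ : ℝ≥0∞))
          ((Measure.prod μv μv).restrict (A n ×ˢ A n)) ≤ S := by
        rw [← qhOsc_eq]; exact le_iSup (fun n => qhOsc f (A n)) n
      have h1 := ENNReal.ae_le_essSup (μ := (Measure.prod μv μv).restrict (A n ×ˢ A n))
        (fun p : E' × E' => (‖f p.1 - f p.2‖₊ : ℝ≥0∞))
      filter_upwards [h1] with p hp
      exact hp.trans hOn
    exact hae
  have hae : ∀ᵐ p ∂(Measure.prod μv μv).restrict ((⋃ n, A n) ×ˢ (⋃ n, A n)),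
      (‖f p.1 - f p.2‖₊ : ℝ≥0∞) ≤ S := by
    rw [ae_iff, Measure.restrict_apply' hUm]
    refine measure_mono_null (Set.inter_subset_inter_right _ hprod) ?_
    rw [Set.inter_iUnion]
    exact measure_iUnion_null key
  exact essSup_le_of_ae_le S hae


lemma qhOsc_closedBall_eq_ball (f : E' → ℝ) (x : E') {ε : ℝ} (hε : 0 < ε) :
    qhOsc f (Metric.closedBall x ε) = qhOsc f (Metric.ball x ε) := by
  rw [qhOsc_eq, qhOsc_eq]
  congr 1
  apply Measure.restrict_congr_set
  have hsph : (Measure.prod μv μv)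
      ((Metric.sphere x ε ×ˢ Set.univ) ∪ (Set.univ ×ˢ Metric.sphere x ε)) = 0 := by
    refine measure_union_null ?_ ?_ <;>
      rw [Measure.prod_prod] <;>
      simp [Measure.addHaar_sphere_of_ne_zero μv x hε.ne']
  have h1 : Metric.closedBall x ε ×ˢ Metric.closedBall x ε \ Metric.ball x ε ×ˢ Metric.ball x ε
      ⊆ (Metric.sphere x ε ×ˢ Set.univ) ∪ (Set.univ ×ˢ Metric.sphere x ε) := by
    rintro ⟨a, b⟩ ⟨⟨ha, hb⟩, hnot⟩
    simp only [Set.mem_prod] at hnot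
    push_neg at hnot
    by_cases hab : a ∈ Metric.ball x ε
    · right
      refine ⟨Set.mem_univ _, ?_⟩
      rw [← Metric.closedBall_diff_ball]
      exact ⟨hb, hnot hab⟩
    · left
      refine ⟨?_, Set.mem_univ _⟩
      rw [← Metric.closedBall_diff_ball]
      exact ⟨ha, hab⟩
  apply (MeasureTheory.ae_eq_set).2
  constructor
  · exact measure_mono_null h1 hsph
  · rw [Set.diff_eq_empty.2 (Set.prod_mono Metric.ball_subset_closedBall
      Metric.ball_subset_closedBall)]
    exact measure_empty

lemma qhOsc_closedBall_lsc (f : E' → ℝ) {ε : ℝ} (hε : 0 < ε) :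
    LowerSemicontinuous (fun x : E' => qhOsc f (Metric.closedBall x ε)) := by
  intro x c hc
  have hmono : Monotone (fun n : ℕ => Metric.closedBall x (ε - 1 / (n + 1))) := by
    intro m n hmn
    apply Metric.closedBall_subset_closedBall
    have : (1 : ℝ) / (n + 1) ≤ 1 / (m + 1) := by
      apply one_div_le_one_div_of_le (by positivity)
      exact_mod_cast by omega
    linarith
  have hunion : (⋃ n : ℕ, Metric.closedBall x (ε - 1 / (n + 1))) = Metric.ball x ε := by
    ext y
    simp only [Set.mem_iUnion, Metric.mem_closedBall, Metric.mem_ball]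
    constructor
    · rintro ⟨n, hn⟩
      have : (0 : ℝ) < 1 / (n + 1) := by positivity
      linarith
    · intro hy
      obtain ⟨n, hn⟩ := exists_nat_one_div_lt (show (0:ℝ) < ε - dist y x by linarith)
      exact ⟨n, by linarith⟩
  have hle : qhOsc f (Metric.closedBall x ε)
      ≤ ⨆ n : ℕ, qhOsc f (Metric.closedBall x (ε - 1 / (n + 1))) := by
    rw [qhOsc_closedBall_eq_ball f x hε, ← hunion]
    exact qhOsc_le_iSup_of_monotone f (fun n => Metric.isClosed_closedBall.measurableSet) hmono
  obtain ⟨n, hn⟩ := lt_iSup_iff.1 (lt_of_lt_of_le hc hle)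
  have hδ : (0 : ℝ) < 1 / (n + 1) := by positivity
  filter_upwards [Metric.ball_mem_nhds x hδ] with x' hx'
  refine lt_of_lt_of_le hn (qhOsc_mono f ?_)
  intro z hz
  rw [Metric.mem_closedBall] at hz ⊢
  have hxx' := Metric.mem_ball.1 hx'
  calc dist z x' ≤ dist z x + dist x x' := dist_triangle _ _ _
    _ ≤ (ε - 1 / (n + 1)) + 1 / (n + 1) := by
        rw [dist_comm x x']; exact add_le_add hz hxx'.le
    _ = ε := by ring

/-- The uniform a.e. bound constant. -/
noncomputable def qhBound {d : ℕ} (α ε₀ : ℝ) (f : EuclideanSpace ℝ (Fin d) → ℝ) : ℝ≥0∞ :=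
  (ENNReal.ofReal (ε₀ ^ α) * qhSeminorm α ε₀ f + ∫⁻ x, ‖f x‖₊ ∂volume) /
    (volume : Measure (EuclideanSpace ℝ (Fin d))) (Metric.closedBall 0 (ε₀ / 2))

lemma vol_mul_qhOsc_le (α : ℝ) {ε₀ : ℝ} (hε₀ : 0 < ε₀) (f : E' → ℝ) (x : E') :
    μv (Metric.closedBall 0 (ε₀ / 2)) * qhOsc f (Metric.closedBall x (ε₀ / 2))
      ≤ ENNReal.ofReal (ε₀ ^ α) * qhSeminorm α ε₀ f := by
  set r := ε₀ / 2 with hr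
  have hrpos : 0 < r := by positivity
  have hstep : μv (Metric.closedBall 0 r) * qhOsc f (Metric.closedBall x r)
      ≤ ∫⁻ y, qhOsc f (Metric.closedBall y ε₀) ∂μv := by
    calc μv (Metric.closedBall 0 r) * qhOsc f (Metric.closedBall x r)
        = ∫⁻ _ in Metric.closedBall x r, qhOsc f (Metric.closedBall x r) ∂μv := by
          rw [setLIntegral_const, Measure.addHaar_closedBall_center μv x r, mul_comm]
      _ ≤ ∫⁻ y in Metric.closedBall x r, qhOsc f (Metric.closedBall y ε₀) ∂μv := by
          refine setLIntegral_mono' Metric.isClosed_closedBall.measurableSet fun y hy => ?_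
          refine qhOsc_mono f fun z hz => ?_
          rw [Metric.mem_closedBall] at *
          calc dist z y ≤ dist z x + dist x y := dist_triangle _ _ _
            _ ≤ r + r := add_le_add hz (by rwa [dist_comm])
            _ = ε₀ := by rw [hr]; ring
      _ ≤ ∫⁻ y, qhOsc f (Metric.closedBall y ε₀) ∂μv := setLIntegral_le_lintegral _ _
  refine hstep.trans ?_
  set T := ∫⁻ y, qhOsc f (Metric.closedBall y ε₀) ∂μv with hTdef
  have hsem : ENNReal.ofReal (ε₀ ^ (-α)) * T ≤ qhSeminorm α ε₀ f :=
    le_biSup (fun ε => ENNReal.ofReal (ε ^ (-α)) *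
      ∫⁻ x, qhOsc f (Metric.closedBall x ε) ∂volume) ⟨hε₀, le_rfl⟩
  have hT : T = ENNReal.ofReal (ε₀ ^ α) * (ENNReal.ofReal (ε₀ ^ (-α)) * T) := by
    rw [← mul_assoc, ← ENNReal.ofReal_mul (Real.rpow_nonneg hε₀.le α),
      ← Real.rpow_add hε₀, add_neg_cancel, Real.rpow_zero, ENNReal.ofReal_one, one_mul]
  rw [hT]
  exact mul_le_mul_right hsem _

lemma ae_nnnorm_le_qhBound (α : ℝ) {ε₀ : ℝ} (hε₀ : 0 < ε₀) (f : E' → ℝ) :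
    ∀ᵐ y ∂μv, (‖f y‖₊ : ℝ≥0∞) ≤ qhBound α ε₀ f := by
  set r := ε₀ / 2 with hrdef
  have hrpos : 0 < r := by positivity
  set v := μv (Metric.closedBall 0 r) with hv
  have hv0 : v ≠ 0 := (Metric.measure_closedBall_pos μv _ hrpos).ne'
  have hvt : v ≠ ∞ := measure_closedBall_lt_top.ne
  set I := ∫⁻ x, (‖f x‖₊ : ℝ≥0∞) ∂μv with hI
  have hloc : ∀ x : E', ∀ᵐ y ∂(Measure.restrict μv (Metric.closedBall x r)),
      (‖f y‖₊ : ℝ≥0∞) ≤ qhBound α ε₀ f := by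
    intro x
    set B := Metric.closedBall x r with hB
    have hvB : μv B = v := Measure.addHaar_closedBall_center μv x r
    have hprod := ENNReal.ae_le_essSup
      (μ := (Measure.restrict μv B).prod (Measure.restrict μv B))
      (fun p : E' × E' => (‖f p.1 - f p.2‖₊ : ℝ≥0∞))
    have h2 := MeasureTheory.Measure.ae_ae_of_ae_prod hprod
    filter_upwards [h2] with y hy
    set c := qhOsc f B with hc
    have key : v * (‖f y‖₊ : ℝ≥0∞) ≤ c * v + I := by
      calc v * (‖f y‖₊ : ℝ≥0∞) = ∫⁻ _ in B, ((‖f y‖₊ : ℝ≥0∞)) ∂μv := by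
            rw [setLIntegral_const, hvB, mul_comm]
        _ ≤ ∫⁻ z in B, (c + (‖f z‖₊ : ℝ≥0∞)) ∂μv := by
            refine lintegral_mono_ae (hy.mono fun z hz => ?_)
            have h4 : f y = (f y - f z) + f z := by ring
            calc (‖f y‖₊ : ℝ≥0∞) = ‖(f y - f z) + f z‖₊ := by rw [← h4]
              _ ≤ (‖f y - f z‖₊ : ℝ≥0∞) + ‖f z‖₊ := by
                  rw [← ENNReal.coe_add]; exact_mod_cast nnnorm_add_le _ _
              _ ≤ c + ‖f z‖₊ := add_le_add_left hz _
        _ = c * μv B + ∫⁻ z in B, (‖f z‖₊ : ℝ≥0∞) ∂μv := by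
            rw [lintegral_add_left measurable_const, setLIntegral_const]
        _ ≤ c * v + I := by
            rw [hvB]
            exact add_le_add_right (setLIntegral_le_lintegral _ _) _
    have h3 : (‖f y‖₊ : ℝ≥0∞) ≤ (c * v + I) / v := by
      rw [ENNReal.le_div_iff_mul_le (Or.inl hv0) (Or.inl hvt), mul_comm]
      exact key
    refine h3.trans ?_
    rw [ENNReal.add_div, mul_div_assoc, ENNReal.div_self hv0 hvt, mul_one]
    have hcle : c ≤ ENNReal.ofReal (ε₀ ^ α) * qhSeminorm α ε₀ f / v := by
      rw [ENNReal.le_div_iff_mul_le (Or.inl hv0) (Or.inl hvt), mul_comm]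
      exact vol_mul_qhOsc_le α hε₀ f x
    calc c + I / v ≤ ENNReal.ofReal (ε₀ ^ α) * qhSeminorm α ε₀ f / v + I / v :=
          add_le_add_left hcle _
      _ = qhBound α ε₀ f := by rw [qhBound, ENNReal.add_div]
  -- countable cover
  obtain ⟨u, hu⟩ : ∃ u : ℕ → E', DenseRange u :=
    ⟨TopologicalSpace.denseSeq E', TopologicalSpace.denseRange_denseSeq E'⟩
  rw [ae_iff]
  have : {y : E' | ¬ (‖f y‖₊ : ℝ≥0∞) ≤ qhBound α ε₀ f}
      ⊆ ⋃ n, ({y : E' | ¬ (‖f y‖₊ : ℝ≥0∞) ≤ qhBound α ε₀ f} ∩ Metric.closedBall (u n) r) := by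
    intro y hy
    obtain ⟨n, hn⟩ := hu.exists_dist_lt y hrpos
    exact Set.mem_iUnion.2 ⟨n, hy, Metric.mem_closedBall.2 hn.le⟩
  refine measure_mono_null this (measure_iUnion_null fun n => ?_)
  rw [← Measure.restrict_apply' Metric.isClosed_closedBall.measurableSet]
  exact ae_iff.1 (hloc (u n))


lemma ae_prod_fst_le {f : E' → ℝ} {K : ℝ≥0∞} (A : Set E')
    (h : ∀ᵐ x ∂μv, (‖f x‖₊ : ℝ≥0∞) ≤ K) :
    ∀ᵐ p ∂(Measure.restrict μv A).prod (Measure.restrict μv A),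
      (‖f p.1‖₊ : ℝ≥0∞) ≤ K := by
  rw [ae_iff] at h ⊢
  have hset : {p : E' × E' | ¬ (‖f p.1‖₊ : ℝ≥0∞) ≤ K}
      = {x : E' | ¬ (‖f x‖₊ : ℝ≥0∞) ≤ K} ×ˢ (Set.univ : Set E') := by
    ext p; simp [Set.mem_prod]
  rw [hset, Measure.prod_prod]
  have h0 : Measure.restrict μv A {x : E' | ¬ (‖f x‖₊ : ℝ≥0∞) ≤ K} = 0 :=
    le_antisymm (le_trans (Measure.restrict_apply_le _ _) h.le) (zero_le)
  rw [h0, zero_mul]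

lemma ae_prod_snd_le {f : E' → ℝ} {K : ℝ≥0∞} (A : Set E')
    (h : ∀ᵐ x ∂μv, (‖f x‖₊ : ℝ≥0∞) ≤ K) :
    ∀ᵐ p ∂(Measure.restrict μv A).prod (Measure.restrict μv A),
      (‖f p.2‖₊ : ℝ≥0∞) ≤ K := by
  rw [ae_iff] at h ⊢
  have hset : {p : E' × E' | ¬ (‖f p.2‖₊ : ℝ≥0∞) ≤ K}
      = (Set.univ : Set E') ×ˢ {x : E' | ¬ (‖f x‖₊ : ℝ≥0∞) ≤ K} := by
    ext p; simp [Set.mem_prod]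
  rw [hset, Measure.prod_prod]
  have h0 : Measure.restrict μv A {x : E' | ¬ (‖f x‖₊ : ℝ≥0∞) ≤ K} = 0 :=
    le_antisymm (le_trans (Measure.restrict_apply_le _ _) h.le) (zero_le)
  rw [h0, mul_zero]

lemma qhOsc_mul_le {f g : E' → ℝ} {Kf Kg : ℝ≥0∞}
    (hfK : ∀ᵐ x ∂μv, (‖f x‖₊ : ℝ≥0∞) ≤ Kf)
    (hgK : ∀ᵐ x ∂μv, (‖g x‖₊ : ℝ≥0∞) ≤ Kg) (A : Set E') :
    qhOsc (f * g) A ≤ Kf * qhOsc g A + Kg * qhOsc f A := by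
  have h1 := ENNReal.ae_le_essSup
    (μ := (Measure.restrict μv A).prod (Measure.restrict μv A))
    (fun p : E' × E' => (‖f p.1 - f p.2‖₊ : ℝ≥0∞))
  have h2 := ENNReal.ae_le_essSup
    (μ := (Measure.restrict μv A).prod (Measure.restrict μv A))
    (fun p : E' × E' => (‖g p.1 - g p.2‖₊ : ℝ≥0∞))
  have h3 := ae_prod_fst_le A hfK
  have h4 := ae_prod_snd_le A hgK
  have hae : ∀ᵐ p ∂(Measure.restrict μv A).prod (Measure.restrict μv A),
      (‖(f * g) p.1 - (f * g) p.2‖₊ : ℝ≥0∞) ≤ Kf * qhOsc g A + Kg * qhOsc f A := by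
    filter_upwards [h1, h2, h3, h4] with p hp1 hp2 hp3 hp4
    have hsplit : (f * g) p.1 - (f * g) p.2
        = f p.1 * (g p.1 - g p.2) + (f p.1 - f p.2) * g p.2 := by
      simp only [Pi.mul_apply]; ring
    calc (‖(f * g) p.1 - (f * g) p.2‖₊ : ℝ≥0∞)
        ≤ (‖f p.1‖₊ : ℝ≥0∞) * ‖g p.1 - g p.2‖₊ + (‖g p.2‖₊ : ℝ≥0∞) * ‖f p.1 - f p.2‖₊ := by
          rw [hsplit]
          calc (‖f p.1 * (g p.1 - g p.2) + (f p.1 - f p.2) * g p.2‖₊ : ℝ≥0∞)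
              ≤ (‖f p.1 * (g p.1 - g p.2)‖₊ : ℝ≥0∞) + ‖(f p.1 - f p.2) * g p.2‖₊ := by
                exact_mod_cast nnnorm_add_le _ _
            _ = (‖f p.1‖₊ : ℝ≥0∞) * ‖g p.1 - g p.2‖₊
                + (‖g p.2‖₊ : ℝ≥0∞) * ‖f p.1 - f p.2‖₊ := by
                rw [nnnorm_mul, nnnorm_mul, ENNReal.coe_mul, ENNReal.coe_mul,
                  mul_comm (‖f p.1 - f p.2‖₊ : ℝ≥0∞)]
      _ ≤ Kf * qhOsc g A + Kg * qhOsc f A := by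
          refine add_le_add (mul_le_mul' hp3 ?_) (mul_le_mul' hp4 ?_)
          · exact hp2
          · exact hp1
  exact essSup_le_of_ae_le _ hae

lemma qhSeminorm_mul_le (α : ℝ) {ε₀ : ℝ} (hε₀ : 0 < ε₀) {f g : E' → ℝ} {Kf Kg : ℝ≥0∞}
    (hfK : ∀ᵐ x ∂μv, (‖f x‖₊ : ℝ≥0∞) ≤ Kf)
    (hgK : ∀ᵐ x ∂μv, (‖g x‖₊ : ℝ≥0∞) ≤ Kg) :
    qhSeminorm α ε₀ (f * g) ≤ Kf * qhSeminorm α ε₀ g + Kg * qhSeminorm α ε₀ f := by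
  rw [qhSeminorm]
  refine iSup₂_le fun ε hε => ?_
  have hmf : Measurable fun x : E' => qhOsc f (Metric.closedBall x ε) :=
    (qhOsc_closedBall_lsc f hε.1).measurable
  have hmg : Measurable fun x : E' => qhOsc g (Metric.closedBall x ε) :=
    (qhOsc_closedBall_lsc g hε.1).measurable
  calc ENNReal.ofReal (ε ^ (-α)) * ∫⁻ x, qhOsc (f * g) (Metric.closedBall x ε) ∂μv
      ≤ ENNReal.ofReal (ε ^ (-α)) *
        ∫⁻ x, (Kf * qhOsc g (Metric.closedBall x ε)
          + Kg * qhOsc f (Metric.closedBall x ε)) ∂μv := by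
        exact mul_le_mul_right (lintegral_mono fun x => qhOsc_mul_le hfK hgK _) _
    _ = Kf * (ENNReal.ofReal (ε ^ (-α)) * ∫⁻ x, qhOsc g (Metric.closedBall x ε) ∂μv)
        + Kg * (ENNReal.ofReal (ε ^ (-α)) * ∫⁻ x, qhOsc f (Metric.closedBall x ε) ∂μv) := by
        rw [lintegral_add_left (hmg.const_mul Kf), lintegral_const_mul Kf hmg,
          lintegral_const_mul Kg hmf, mul_add]
        ring
    _ ≤ Kf * qhSeminorm α ε₀ g + Kg * qhSeminorm α ε₀ f := by
        refine add_le_add (mul_le_mul_right ?_ _) (mul_le_mul_right ?_ _)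
        · exact le_biSup (fun ε => ENNReal.ofReal (ε ^ (-α)) *
            ∫⁻ x, qhOsc g (Metric.closedBall x ε) ∂volume) hε
        · exact le_biSup (fun ε => ENNReal.ofReal (ε ^ (-α)) *
            ∫⁻ x, qhOsc f (Metric.closedBall x ε) ∂volume) hε

end Aux

/-- The quasi-Hölder space `V_α(M)` (for `0 < α ≤ 1`, `ε₀ > 0`, `M`
compact) is a Banach algebra under pointwise multiplication : there is a constant
`C > 0` such that for all `f, g ∈ V_α(M)`, the pointwise product `f * g` belongs to
`V_α(M)` and `‖fg‖_α ≤ C ‖f‖_α ‖g‖_α`. -/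
theorem stmt_16 (d : ℕ) (α ε₀ : ℝ) (hα : 0 < α) (hα1 : α ≤ 1) (hε₀ : 0 < ε₀)
    (M : Set (EuclideanSpace ℝ (Fin d))) (hM : IsCompact M) :
    ∃ C : ℝ, 0 < C ∧
      ∀ f g : EuclideanSpace ℝ (Fin d) → ℝ, memVα α ε₀ M f → memVα α ε₀ M g →
        memVα α ε₀ M (f * g) ∧
        qhNorm α ε₀ (f * g) ≤ C * qhNorm α ε₀ f * qhNorm α ε₀ g := by
  classical
  set v := (volume : Measure (EuclideanSpace ℝ (Fin d))) (Metric.closedBall 0 (ε₀ / 2)) with hv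
  have hv0 : v ≠ 0 := (Metric.measure_closedBall_pos _ _ (by positivity)).ne'
  have hvt : v ≠ ∞ := measure_closedBall_lt_top.ne
  set c₀ : ℝ≥0∞ := (1 + ENNReal.ofReal (ε₀ ^ α)) / v with hc₀
  have hc₀t : c₀ ≠ ∞ := by
    rw [hc₀]
    exact (ENNReal.div_lt_top (ENNReal.add_ne_top.2 ⟨ENNReal.one_ne_top,
      ENNReal.ofReal_ne_top⟩) hv0).ne
  refine ⟨max (2 * c₀).toReal 1, lt_of_lt_of_le one_pos (le_max_right _ _), ?_⟩
  rintro f g ⟨hfi, hfS, hfsupp⟩ ⟨hgi, hgS, hgsupp⟩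
  set If := ∫⁻ x, (‖f x‖₊ : ℝ≥0∞) ∂volume with hIf
  set Ig := ∫⁻ x, (‖g x‖₊ : ℝ≥0∞) ∂volume with hIg
  have hIft : If ≠ ∞ := hfi.2.ne
  have hIgt : Ig ≠ ∞ := hgi.2.ne
  set Sf := qhSeminorm α ε₀ f with hSf
  set Sg := qhSeminorm α ε₀ g with hSg
  set Kf := qhBound α ε₀ f with hKf
  set Kg := qhBound α ε₀ g with hKg
  have hfK : ∀ᵐ x ∂(volume : Measure (EuclideanSpace ℝ (Fin d))),
      (‖f x‖₊ : ℝ≥0∞) ≤ Kf := ae_nnnorm_le_qhBound α hε₀ f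
  have hgK : ∀ᵐ x ∂(volume : Measure (EuclideanSpace ℝ (Fin d))),
      (‖g x‖₊ : ℝ≥0∞) ≤ Kg := ae_nnnorm_le_qhBound α hε₀ g
  have hKft : Kf ≠ ∞ := by
    rw [hKf, qhBound]
    exact (ENNReal.div_lt_top (ENNReal.add_ne_top.2
      ⟨ENNReal.mul_ne_top ENNReal.ofReal_ne_top hfS, hIft⟩) hv0).ne
  have hKgt : Kg ≠ ∞ := by
    rw [hKg, qhBound]
    exact (ENNReal.div_lt_top (ENNReal.add_ne_top.2
      ⟨ENNReal.mul_ne_top ENNReal.ofReal_ne_top hgS, hIgt⟩) hv0).ne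
  -- bound on qhBound in terms of the full norm
  have hKbound : ∀ (h : EuclideanSpace ℝ (Fin d) → ℝ),
      qhBound α ε₀ h ≤ c₀ * ((∫⁻ x, (‖h x‖₊ : ℝ≥0∞) ∂volume) + qhSeminorm α ε₀ h) := by
    intro h
    set Ih := ∫⁻ x, (‖h x‖₊ : ℝ≥0∞) ∂volume
    set Sh := qhSeminorm α ε₀ h
    have h1 : ENNReal.ofReal (ε₀ ^ α) * Sh + Ih
        ≤ (1 + ENNReal.ofReal (ε₀ ^ α)) * (Ih + Sh) := by
      have expand : (1 + ENNReal.ofReal (ε₀ ^ α)) * (Ih + Sh)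
          = (ENNReal.ofReal (ε₀ ^ α) * Sh + Ih) + (Sh + ENNReal.ofReal (ε₀ ^ α) * Ih) := by
        ring
      rw [expand]
      exact le_self_add
    calc qhBound α ε₀ h = (ENNReal.ofReal (ε₀ ^ α) * Sh + Ih) / v := rfl
      _ ≤ ((1 + ENNReal.ofReal (ε₀ ^ α)) * (Ih + Sh)) / v := ENNReal.div_le_div_right h1 _
      _ = c₀ * (Ih + Sh) := by
        rw [hc₀, div_eq_mul_inv, div_eq_mul_inv, mul_right_comm]
  have hKfle : Kf ≤ c₀ * (If + Sf) := hKbound f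
  have hKgle : Kg ≤ c₀ * (Ig + Sg) := hKbound g
  -- integral bound for the product
  have haefg : ∀ᵐ x ∂(volume : Measure (EuclideanSpace ℝ (Fin d))),
      (‖(f * g) x‖₊ : ℝ≥0∞) ≤ Kf * ‖g x‖₊ := by
    filter_upwards [hfK] with x hx
    simp only [Pi.mul_apply]
    rw [nnnorm_mul, ENNReal.coe_mul]
    exact mul_le_mul_left hx _
  have hIfg : (∫⁻ x, (‖(f * g) x‖₊ : ℝ≥0∞) ∂volume) ≤ Kf * Ig := by
    calc (∫⁻ x, (‖(f * g) x‖₊ : ℝ≥0∞) ∂volume)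
        ≤ ∫⁻ x, Kf * (‖g x‖₊ : ℝ≥0∞) ∂volume := lintegral_mono_ae haefg
      _ = Kf * Ig := lintegral_const_mul' _ _ hKft
  have hSfg : qhSeminorm α ε₀ (f * g) ≤ Kf * Sg + Kg * Sf :=
    qhSeminorm_mul_le α hε₀ hfK hgK
  -- integrability of the product
  have hfgInt : Integrable (f * g) volume := by
    refine Integrable.mono' ((hgi.norm).const_mul Kf.toReal)
      (hfi.aestronglyMeasurable.mul hgi.aestronglyMeasurable) ?_
    filter_upwards [hfK] with x hx
    rw [Pi.mul_apply, norm_mul]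
    have hfx : ‖f x‖ ≤ Kf.toReal := by
      have := ENNReal.toReal_mono hKft hx
      rwa [ENNReal.coe_toReal, coe_nnnorm] at this
    exact mul_le_mul_of_nonneg_right hfx (norm_nonneg _)
  have hSfgt : qhSeminorm α ε₀ (f * g) ≠ ∞ :=
    (lt_of_le_of_lt hSfg (lt_top_iff_ne_top.2 (ENNReal.add_ne_top.2
      ⟨ENNReal.mul_ne_top hKft hgS, ENNReal.mul_ne_top hKgt hfS⟩))).ne
  have hsupp : Function.support (f * g) ⊆ M := by
    intro x hx
    rw [Function.mem_support, Pi.mul_apply] at hx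
    exact hfsupp (Function.mem_support.2 fun h => hx (by rw [h, zero_mul]))
  refine ⟨⟨hfgInt, hSfgt, hsupp⟩, ?_⟩
  -- norm computation
  have hqh : ∀ h : EuclideanSpace ℝ (Fin d) → ℝ, Integrable h volume →
      qhSeminorm α ε₀ h ≠ ∞ →
      qhNorm α ε₀ h = ((∫⁻ x, (‖h x‖₊ : ℝ≥0∞) ∂volume) + qhSeminorm α ε₀ h).toReal := by
    intro h hint hS
    rw [qhNorm, ENNReal.toReal_add (a := ∫⁻ x, (‖h x‖₊ : ℝ≥0∞) ∂volume) hint.2.ne hS]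
    congr 1
    have habs : ∀ x, |h x| = ‖h x‖ := fun x => (Real.norm_eq_abs _).symm
    simp_rw [habs]
    exact integral_norm_eq_lintegral_enorm hint.aestronglyMeasurable
  set Nf := If + Sf with hNf
  set Ng := Ig + Sg with hNg
  have hNft : Nf ≠ ∞ := ENNReal.add_ne_top.2 ⟨hIft, hfS⟩
  have hNgt : Ng ≠ ∞ := ENNReal.add_ne_top.2 ⟨hIgt, hgS⟩
  have hmain : (∫⁻ x, (‖(f * g) x‖₊ : ℝ≥0∞) ∂volume) + qhSeminorm α ε₀ (f * g)
      ≤ 2 * c₀ * Nf * Ng := by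
    calc (∫⁻ x, (‖(f * g) x‖₊ : ℝ≥0∞) ∂volume) + qhSeminorm α ε₀ (f * g)
        ≤ Kf * Ig + (Kf * Sg + Kg * Sf) := add_le_add hIfg hSfg
      _ = Kf * Ng + Kg * Sf := by rw [hNg]; ring
      _ ≤ Kf * Ng + Kg * Nf := by
          exact add_le_add_right (mul_le_mul_right le_add_self _) _
      _ ≤ (c₀ * Nf) * Ng + (c₀ * Ng) * Nf :=
          add_le_add (mul_le_mul_left hKfle _) (mul_le_mul_left hKgle _)
      _ = 2 * c₀ * Nf * Ng := by ring
  have hrhs_t : 2 * c₀ * Nf * Ng ≠ ∞ :=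
    ENNReal.mul_ne_top (ENNReal.mul_ne_top
      (ENNReal.mul_ne_top (by norm_num) hc₀t) hNft) hNgt
  have hfin : qhNorm α ε₀ (f * g) ≤ (2 * c₀).toReal * Nf.toReal * Ng.toReal := by
    rw [hqh (f * g) hfgInt hSfgt]
    calc ((∫⁻ x, (‖(f * g) x‖₊ : ℝ≥0∞) ∂volume) + qhSeminorm α ε₀ (f * g)).toReal
        ≤ (2 * c₀ * Nf * Ng).toReal := ENNReal.toReal_mono hrhs_t hmain
      _ = (2 * c₀).toReal * Nf.toReal * Ng.toReal := by
          rw [ENNReal.toReal_mul, ENNReal.toReal_mul]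
  rw [hqh f hfi hfS, hqh g hgi hgS]
  refine hfin.trans ?_
  have h2c : (2 * c₀).toReal ≤ max (2 * c₀).toReal 1 := le_max_left _ _
  exact mul_le_mul_of_nonneg_right
    (mul_le_mul_of_nonneg_right h2c ENNReal.toReal_nonneg) ENNReal.toReal_nonneg
end
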